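/- Let p be an odd prime, n ≥ 1, and x₁, …, x_p ∈ 𝔽_p^n. Define F_p(x₁,…,x_p) = Π_{i=1}^{n} (1 − (x_{1i} + x_{2i} + ⋯ + x_{pi})^{p−1}) ∈ 𝔽_p, where x_{ji} is the i-th coordinate of x_j, and define R_p(x₁,…,x_p) ∈ 𝔽_p as the image in 𝔽_p of Σ sgn(σ)·[the tuple is fixed by σ], summed over all permutations σ ∈ S_p with at least 3 orbits on Fin p. Let I_p = R_p · F_p. Then I_p(x₁,…,x_p) = 1 if x₁, …, x_p are pairwise distinct and x₁ + ⋯ + x_p = 0; I_p(x₁,…,x_p) = 1 if x₁ = ⋯ = x_p; and I_p(x₁,…,x_p) = 0 in all other cases. -/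

import Mathlib

/-- The number of cycles of a permutation of `Fin p`, counting fixed points as cycles
(i.e. the number of orbits of `σ` on `Fin p`). -/
def orbitCount {p : ℕ} (σ : Equiv.Perm (Fin p)) : ℕ :=
  (Finset.univ.filter fun i => σ i = i).card + Multiset.card σ.cycleType

/-- `F_p(x₁,…,x_p) = ∏_{i=1}^n (1 - (x_{1i} + ⋯ + x_{pi})^{p-1})` in `𝔽_p`. -/
def Fp (p n : ℕ) (x : Fin p → (Fin n → ZMod p)) : ZMod p :=
  ∏ i : Fin n, (1 - (∑ j : Fin p, x j i) ^ (p - 1))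

/-- `R_p(x₁,…,x_p)`: the image in `𝔽_p` of `∑ sgn(σ)·[x ∘ σ = x]`, summed over the
permutations `σ ∈ S_p` with at least 3 orbits on `Fin p`. -/
def Rp (p n : ℕ) (x : Fin p → (Fin n → ZMod p)) : ZMod p :=
  ((∑ σ ∈ Finset.univ.filter (fun σ : Equiv.Perm (Fin p) => 3 ≤ orbitCount σ),
    (Equiv.Perm.sign σ : ℤ) * (if ∀ i, x (σ i) = x i then 1 else 0) : ℤ) : ZMod p)

/-- `I_p = R_p · F_p`. -/
def Ip (p n : ℕ) (x : Fin p → (Fin n → ZMod p)) : ZMod p :=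
  Rp p n x * Fp p n x

open Finset Equiv Equiv.Perm Function

section Aux

/-- Sum of an invariant function over an invariant finset is ≡ the sum over the
fixed points, mod p, when the map has order dividing a prime p. -/
lemma orbit_sum {β : Type*} [DecidableEq β] {p : ℕ} (hp : p.Prime) (e : β → β)
    (hep : ∀ b, e^[p] b = b) (f : β → ℤ) (hf : ∀ b, f (e b) = f b) :
    ∀ A : Finset β, (∀ b ∈ A, e b ∈ A) →
      (p : ℤ) ∣ (∑ b ∈ A, f b) - (∑ b ∈ A.filter (fun b => e b = b), f b) := by
  have hp1 : 1 < p := hp.one_lt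
  have hf_iter : ∀ k b, f (e^[k] b) = f b := by
    intro k
    induction k with
    | zero => intro b; rfl
    | succ k ihk => intro b; rw [Function.iterate_succ_apply', hf, ihk]
  intro A
  induction A using Finset.strongInduction with
  | _ A ih =>
    intro hA
    by_cases hfixall : ∀ b ∈ A, e b = b
    · rw [Finset.filter_true_of_mem hfixall, sub_self]
      exact dvd_zero _
    push_neg at hfixall
    obtain ⟨σ, hσA, hσ⟩ := hfixall
    have hiter_mem : ∀ k, e^[k] σ ∈ A := by
      intro k
      induction k with
      | zero => simpa
      | succ k ihk => rw [Function.iterate_succ_apply']; exact hA _ ihk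
    have hfree : ∀ k, 0 < k → k < p → e^[k] σ ≠ σ := by
      intro k hk0 hkp hkσ
      have hcop : Nat.Coprime k p :=
        (Nat.Prime.coprime_iff_not_dvd hp |>.mpr (Nat.not_dvd_of_pos_of_lt hk0 hkp)).symm
      obtain ⟨m, -, hm⟩ := Nat.exists_mul_mod_eq_one_of_coprime hcop hp1
      have h1 : e^[k * m] σ = σ := by
        rw [Function.iterate_mul]
        clear hm
        induction m with
        | zero => rfl
        | succ m ihm => rw [Function.iterate_succ_apply, hkσ, ihm]
      have hpq : ∀ q b, e^[p * q] b = b := by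
        intro q
        induction q with
        | zero => intro b; rfl
        | succ q ihq => intro b; rw [mul_add, mul_one, Function.iterate_add_apply, hep, ihq]
      have hkm : k * m = p * (k * m / p) + 1 := by
        have := Nat.div_add_mod (k * m) p
        omega
      have h2 : e^[k * m] σ = e σ := by
        rw [hkm, Function.iterate_add_apply, Function.iterate_one, hpq]
      exact hσ (by rw [← h2, h1])
    -- The orbit of σ
    set O : Finset β := (Finset.range p).image (fun k => e^[k] σ) with hO
    have hinjOn : ∀ j ∈ Finset.range p, ∀ k ∈ Finset.range p,
        e^[j] σ = e^[k] σ → j = k := by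
      have key : ∀ j k, j ∈ Finset.range p → k ∈ Finset.range p → j ≤ k →
          e^[j] σ = e^[k] σ → j = k := by
        intro j k hj hk hjk heq
        rw [Finset.mem_range] at hj hk
        have h1 : e^[p - j] (e^[j] σ) = σ := by
          rw [← Function.iterate_add_apply, Nat.sub_add_cancel hj.le, hep]
        have h2 : e^[p - j] (e^[k] σ) = e^[k - j] σ := by
          rw [← Function.iterate_add_apply]
          have : p - j + k = (k - j) + p := by omega
          rw [this, Function.iterate_add_apply, hep]
        rw [heq, h2] at h1
        by_contra hne
        exact hfree (k - j) (by omega) (by omega) h1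
      intro j hj k hk heq
      rcases le_total j k with h | h
      · exact key j k hj hk h heq
      · exact (key k j hk hj h heq.symm).symm
    have hOcard : O.card = p := by
      rw [hO, Finset.card_image_of_injOn hinjOn, Finset.card_range]
    have hOsub : O ⊆ A := by
      intro b hb
      rw [hO, Finset.mem_image] at hb
      obtain ⟨k, _, rfl⟩ := hb
      exact hiter_mem k
    have hOne : O.Nonempty := by
      refine ⟨σ, ?_⟩
      rw [hO, Finset.mem_image]
      exact ⟨0, Finset.mem_range.mpr (by omega), rfl⟩
    have hssub : A \ O ⊂ A := Finset.sdiff_ssubset hOsub hOne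
    have hcancel : ∀ b, e^[p - 1] (e b) = b := by
      intro b
      have h := Function.iterate_add_apply e (p - 1) 1 b
      rw [Nat.sub_add_cancel hp1.le, hep] at h
      simpa using h.symm
    have hA' : ∀ b ∈ A \ O, e b ∈ A \ O := by
      intro b hb
      rw [Finset.mem_sdiff] at hb ⊢
      refine ⟨hA _ hb.1, fun hbO => hb.2 ?_⟩
      rw [hO, Finset.mem_image] at hbO ⊢
      obtain ⟨k, hk, hkeq⟩ := hbO
      rw [Finset.mem_range] at hk
      match k, hk with
      | 0, _ =>
        refine ⟨p - 1, Finset.mem_range.mpr (by omega), ?_⟩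
        rw [show e^[0] σ = σ from rfl] at hkeq
        rw [hkeq, hcancel]
      | (k+1), hk =>
        refine ⟨k, Finset.mem_range.mpr (by omega), ?_⟩
        rw [Function.iterate_succ_apply'] at hkeq
        have := congrArg (e^[p - 1]) hkeq
        rwa [hcancel, hcancel] at this
    have hOfix : ∀ b ∈ O, e b ≠ b := by
      intro b hb hbfix
      rw [hO, Finset.mem_image] at hb
      obtain ⟨k, hk, rfl⟩ := hb
      rw [Finset.mem_range] at hk
      have h1 : e^[k] (e σ) = e^[k] σ := by
        rw [← Function.iterate_succ_apply, Function.iterate_succ_apply', hbfix]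
      have := congrArg (e^[p - k]) h1
      rw [← Function.iterate_add_apply, ← Function.iterate_add_apply,
        Nat.sub_add_cancel hk.le, hep, hep] at this
      exact hσ this
    have hsum_O : ∑ b ∈ O, f b = p * f σ := by
      rw [hO, Finset.sum_image hinjOn]
      rw [Finset.sum_congr rfl (fun k _ => hf_iter k σ), Finset.sum_const,
        Finset.card_range, nsmul_eq_mul]
    have hsplit : ∑ b ∈ A, f b = ∑ b ∈ A \ O, f b + ∑ b ∈ O, f b :=
      (Finset.sum_sdiff hOsub).symm
    have hfilter : A.filter (fun b => e b = b) = (A \ O).filter (fun b => e b = b) := by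
      ext b
      simp only [Finset.mem_filter, Finset.mem_sdiff]
      constructor
      · rintro ⟨hbA, hbe⟩
        exact ⟨⟨hbA, fun hbO => hOfix b hbO hbe⟩, hbe⟩
      · rintro ⟨⟨hbA, _⟩, hbe⟩
        exact ⟨hbA, hbe⟩
    rw [hsplit, hsum_O, hfilter]
    have := ih (A \ O) hssub hA'
    obtain ⟨c, hc⟩ := this
    exact ⟨c + f σ, by linarith⟩

variable {p n : ℕ}

lemma orbitCount_one (hp : 0 < p) : orbitCount (1 : Equiv.Perm (Fin p)) = p := by
  unfold orbitCount
  rw [Equiv.Perm.cycleType_one]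
  simp

lemma orbitCount_eq_one {σ : Equiv.Perm (Fin p)} (hσ : σ.IsCycle)
    (hs : σ.support = Finset.univ) : orbitCount σ = 1 := by
  unfold orbitCount
  have h1 : (Finset.univ.filter fun i => σ i = i) = ∅ := by
    ext i
    simp only [Finset.mem_filter, Finset.mem_univ, true_and, Finset.notMem_empty,
      iff_false]
    intro hi
    have : i ∈ σ.support := hs ▸ Finset.mem_univ i
    exact (Equiv.Perm.mem_support.mp this) hi
  rw [h1, hσ.cycleType]
  simp

lemma Rp_eq (p n : ℕ) (x : Fin p → (Fin n → ZMod p)) :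
    Rp p n x = (((∑ σ ∈ Finset.univ.filter
      (fun σ : Equiv.Perm (Fin p) => 3 ≤ orbitCount σ ∧ ∀ i, x (σ i) = x i),
      (Equiv.Perm.sign σ : ℤ) : ℤ)) : ZMod p) := by
  unfold Rp
  have h : (∑ σ ∈ Finset.univ.filter (fun σ : Equiv.Perm (Fin p) => 3 ≤ orbitCount σ),
      (Equiv.Perm.sign σ : ℤ) * (if ∀ i, x (σ i) = x i then 1 else 0))
      = ∑ σ ∈ Finset.univ.filter
        (fun σ : Equiv.Perm (Fin p) => 3 ≤ orbitCount σ ∧ ∀ i, x (σ i) = x i),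
        (Equiv.Perm.sign σ : ℤ) := by
    rw [← Finset.filter_filter]
    conv_rhs => rw [Finset.sum_filter]
    refine Finset.sum_congr rfl fun σ _ => ?_
    split_ifs <;> simp
  rw [h]

lemma Fp_eq_one (hp : 1 < p) (x : Fin p → (Fin n → ZMod p)) (h : ∑ j, x j = 0) :
    Fp p n x = 1 := by
  unfold Fp
  rw [Finset.prod_eq_one]
  intro i _
  have hi : ∑ j, x j i = 0 := by
    have := congrFun h i
    rwa [Finset.sum_apply] at this
  rw [hi, zero_pow (by omega), sub_zero]

lemma Fp_eq_zero (hp : p.Prime) (x : Fin p → (Fin n → ZMod p)) (h : ∑ j, x j ≠ 0) :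
    Fp p n x = 0 := by
  haveI := Fact.mk hp
  have : ∃ i, (∑ j, x j) i ≠ 0 := by
    by_contra hc
    push_neg at hc
    exact h (funext hc)
  obtain ⟨i, hi⟩ := this
  rw [Finset.sum_apply] at hi
  apply Finset.prod_eq_zero (Finset.mem_univ i)
  rw [ZMod.pow_card_sub_one_eq_one hi, sub_self]

lemma sum_fix_eq_zero (x : Fin p → (Fin n → ZMod p)) {a b : Fin p} (hab : a ≠ b)
    (hxab : x a = x b) (A : Finset (Equiv.Perm (Fin p)))
    (hA : ∀ σ, σ ∈ A ↔ (∀ i, x (σ i) = x i)) :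
    ∑ σ ∈ A, (Equiv.Perm.sign σ : ℤ) = 0 := by
  have hswap : ∀ i, x (Equiv.swap a b i) = x i := by
    intro i
    rcases eq_or_ne i a with rfl | hia
    · rw [Equiv.swap_apply_left, hxab]
    rcases eq_or_ne i b with rfl | hib
    · rw [Equiv.swap_apply_right, hxab]
    · rw [Equiv.swap_apply_of_ne_of_ne hia hib]
  apply Finset.sum_involution (fun σ _ => σ * Equiv.swap a b)
  · intro σ _
    rw [Equiv.Perm.sign_mul, Equiv.Perm.sign_swap hab]
    push_cast
    ring
  · intro σ _ _ hg
    have h1 : Equiv.swap a b = 1 := mul_left_cancel (a := σ) (by rw [mul_one]; exact hg)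
    exact hab (Equiv.swap_eq_one_iff.mp h1)
  · intro σ hσ
    rw [hA] at hσ ⊢
    intro i
    rw [Equiv.Perm.mul_apply, hσ, hswap]
  · intro σ _
    rw [mul_assoc, Equiv.swap_mul_self, mul_one]

lemma image_card_le_orbitCount (hp : 0 < p) (x : Fin p → (Fin n → ZMod p))
    (σ : Equiv.Perm (Fin p)) (hfix : ∀ i, x (σ i) = x i) :
    (Finset.univ.image x).card ≤ orbitCount σ := by
  classical
  have hx_pow : ∀ (c : Equiv.Perm (Fin p)), c ∈ σ.cycleFactorsFinset →
      ∀ k, ∀ a ∈ c.support, x ((c ^ k) a) = x a := by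
    intro c hc k
    obtain ⟨hcyc, hagree⟩ := Equiv.Perm.mem_cycleFactorsFinset_iff.mp hc
    induction k with
    | zero => intro a _; rfl
    | succ k ihk =>
      intro a ha
      rw [pow_succ, Equiv.Perm.mul_apply]
      have hca : c a ∈ c.support := by rwa [Equiv.Perm.apply_mem_support]
      rw [ihk _ hca, hagree a ha, hfix]
  set pick : Equiv.Perm (Fin p) → Fin p := fun c =>
    if h : c.support.Nonempty then c.support.min' h else ⟨0, hp⟩ with hpick
  have hsub : Finset.univ.image x ⊆
      ((Finset.univ.filter fun i => σ i = i).image x) ∪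
        (σ.cycleFactorsFinset.image fun c => x (pick c)) := by
    intro v hv
    rw [Finset.mem_image] at hv
    obtain ⟨i, _, rfl⟩ := hv
    by_cases hi : σ i = i
    · exact Finset.mem_union_left _
        (Finset.mem_image.mpr ⟨i, Finset.mem_filter.mpr ⟨Finset.mem_univ i, hi⟩, rfl⟩)
    · have hisupp : i ∈ σ.support := Equiv.Perm.mem_support.mpr hi
      have hcmem : σ.cycleOf i ∈ σ.cycleFactorsFinset :=
        Equiv.Perm.cycleOf_mem_cycleFactorsFinset_iff.mpr hisupp
      have hic : i ∈ (σ.cycleOf i).support :=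
        Equiv.Perm.mem_support_cycleOf_iff.mpr ⟨Equiv.Perm.SameCycle.refl _ _, hisupp⟩
      have hne : (σ.cycleOf i).support.Nonempty := ⟨i, hic⟩
      refine Finset.mem_union_right _ (Finset.mem_image.mpr ⟨σ.cycleOf i, hcmem, ?_⟩)
      have hpmem : pick (σ.cycleOf i) ∈ (σ.cycleOf i).support := by
        rw [hpick]
        simp only [hne, dif_pos]
        exact (σ.cycleOf i).support.min'_mem hne
      -- x is constant on the support of the cycle
      obtain ⟨hcyc, _⟩ := Equiv.Perm.mem_cycleFactorsFinset_iff.mp hcmem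
      obtain ⟨k, hk⟩ := hcyc.exists_pow_eq (Equiv.Perm.mem_support.mp hic)
        (Equiv.Perm.mem_support.mp hpmem)
      rw [← hk, hx_pow _ hcmem k i hic]
  calc (Finset.univ.image x).card
      ≤ _ := Finset.card_le_card hsub
    _ ≤ ((Finset.univ.filter fun i => σ i = i).image x).card +
        (σ.cycleFactorsFinset.image fun c => x (pick c)).card := Finset.card_union_le _ _
    _ ≤ (Finset.univ.filter fun i => σ i = i).card + σ.cycleFactorsFinset.card :=
        Nat.add_le_add (Finset.card_image_le) (Finset.card_image_le)
    _ = orbitCount σ := by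
        unfold orbitCount
        congr 1
        rw [Equiv.Perm.cycleType_def]
        simp

lemma not_two_values (hp : p.Prime) (x : Fin p → (Fin n → ZMod p))
    (h0 : ∑ j, x j = 0) (h2 : (Finset.univ.image x).card = 2) : False := by
  haveI := Fact.mk hp
  obtain ⟨a, b, hab, habs⟩ := Finset.card_eq_two.mp h2
  set s : Finset (Fin p) := Finset.univ.filter fun j => x j = a with hs
  have hxb : ∀ j, j ∉ s → x j = b := by
    intro j hj
    have : x j ∈ Finset.univ.image x := Finset.mem_image_of_mem x (Finset.mem_univ j)
    rw [habs, Finset.mem_insert, Finset.mem_singleton] at this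
    rcases this with h | h
    · exact absurd (Finset.mem_filter.mpr ⟨Finset.mem_univ j, h⟩) hj
    · exact h
  have hsum : (0 : Fin n → ZMod p) = (s.card : ℕ) • a + ((Finset.univ \ s).card : ℕ) • b := by
    rw [← h0, ← Finset.sum_sdiff (Finset.subset_univ s) (f := x)]
    rw [Finset.sum_congr rfl (fun j hj => hxb j (Finset.mem_sdiff.mp hj).2),
      Finset.sum_congr (rfl : s = s) (fun j hj => (Finset.mem_filter.mp hj).2),
      Finset.sum_const, Finset.sum_const]
    ring
  have hcards : (Finset.univ \ s).card = p - s.card := by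
    rw [Finset.card_sdiff_of_subset (Finset.subset_univ s)]
    simp
  have hslep : s.card ≤ p := by
    calc s.card ≤ Finset.univ.card := Finset.card_le_card (Finset.subset_univ s)
    _ = p := by simp
  have h1 : (0 : Fin n → ZMod p) = ((s.card : ZMod p)) • (a - b) := by
    rw [hsum, hcards]
    have hb : (((p - s.card : ℕ) : ZMod p)) = -(s.card : ZMod p) := by
      rw [Nat.cast_sub hslep, ZMod.natCast_self, zero_sub]
    rw [← Nat.cast_smul_eq_nsmul (ZMod p), ← Nat.cast_smul_eq_nsmul (ZMod p), hb]
    rw [smul_sub, neg_smul]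
    abel
  have hspos : 0 < s.card := by
    have : a ∈ Finset.univ.image x := habs ▸ Finset.mem_insert_self a {b}
    rw [Finset.mem_image] at this
    obtain ⟨j, _, hj⟩ := this
    exact Finset.card_pos.mpr ⟨j, Finset.mem_filter.mpr ⟨Finset.mem_univ j, hj⟩⟩
  have hsltp : s.card < p := by
    have : b ∈ Finset.univ.image x := habs ▸ Finset.mem_insert_of_mem (Finset.mem_singleton_self b)
    rw [Finset.mem_image] at this
    obtain ⟨j, _, hj⟩ := this
    have hjs : j ∉ s := by
      rw [hs, Finset.mem_filter]
      rintro ⟨-, hja⟩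
      exact hab (hja.symm.trans hj)
    have : s ⊂ Finset.univ := Finset.ssubset_univ_iff.mpr (fun h => hjs (h ▸ Finset.mem_univ j))
    calc s.card < Finset.univ.card := Finset.card_lt_card this
    _ = p := by simp
  have hcne : ((s.card : ZMod p)) ≠ 0 := by
    rw [Ne, ZMod.natCast_eq_zero_iff]
    exact Nat.not_dvd_of_pos_of_lt hspos hsltp
  have : a - b = 0 := by
    rcases smul_eq_zero.mp h1.symm with h | h
    · exact absurd h hcne
    · exact h
  exact hab (by linear_combination (norm := module) this)

lemma sum_sign_filter (hp : p.Prime) (hp3 : 3 ≤ p) :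
    (((∑ σ ∈ Finset.univ.filter (fun σ : Equiv.Perm (Fin p) => 3 ≤ orbitCount σ),
      (Equiv.Perm.sign σ : ℤ) : ℤ)) : ZMod p) = 1 := by
  classical
  set c : Equiv.Perm (Fin p) := finRotate p with hcdef
  have hcyc : c.IsCycle := isCycle_finRotate_of_le (by omega)
  have hsupp : c.support = Finset.univ := support_finRotate_of_le (by omega)
  have horder : orderOf c = p := by rw [hcyc.orderOf, hsupp]; simp
  have hcp : c ^ p = 1 := orderOf_dvd_iff_pow_eq_one.mp (by rw [horder])
  set e : Equiv.Perm (Fin p) → Equiv.Perm (Fin p) := fun σ => c * σ * c⁻¹ with hedef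
  have he_iter : ∀ (k : ℕ) (σ : Equiv.Perm (Fin p)), e^[k] σ = c ^ k * σ * (c ^ k)⁻¹ := by
    intro k
    induction k with
    | zero => intro σ; simp
    | succ k ihk =>
      intro σ
      rw [Function.iterate_succ_apply', ihk]
      simp only [hedef]
      simp only [pow_succ]
      group
  have hep : ∀ σ, e^[p] σ = σ := by
    intro σ; rw [he_iter, hcp]; simp
  have hsign : ∀ σ, ((Equiv.Perm.sign (e σ) : ℤ)) = (Equiv.Perm.sign σ : ℤ) := by
    intro σ
    simp only [hedef, map_mul, map_inv]
    push_cast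
    rcases Int.units_eq_one_or (Equiv.Perm.sign c) with h | h <;>
      rcases Int.units_eq_one_or (Equiv.Perm.sign σ) with h' | h' <;> rw [h, h'] <;> simp
  have hmove : ∀ i : Fin p, c i ≠ i := fun i =>
    Equiv.Perm.mem_support.mp (hsupp ▸ Finset.mem_univ i)
  have horb : ∀ σ, orbitCount (e σ) = orbitCount σ := by
    intro σ
    unfold orbitCount
    simp only [hedef]
    congr 1
    · apply Finset.card_nbij' (fun i => c.symm i) (fun i => c i)
      · intro i hi
        rw [Finset.mem_coe, Finset.mem_filter] at hi ⊢
        refine ⟨Finset.mem_univ _, ?_⟩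
        have h2 := hi.2
        simp only [Equiv.Perm.mul_apply] at h2
        have h3 := congrArg c.symm h2
        simpa [Equiv.Perm.inv_def] using h3
      · intro i hi
        rw [Finset.mem_coe, Finset.mem_filter] at hi ⊢
        refine ⟨Finset.mem_univ _, ?_⟩
        simp only [Equiv.Perm.mul_apply]
        simp [Equiv.Perm.inv_def, hi.2]
      · intro i _; simp
      · intro i _; simp
    · rw [Equiv.Perm.cycleType_conj]
  have hfixed : (Finset.univ.filter (fun σ : Equiv.Perm (Fin p) => 3 ≤ orbitCount σ)).filter
      (fun σ => e σ = σ) = {1} := by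
    ext σ
    simp only [Finset.mem_filter, Finset.mem_univ, true_and, Finset.mem_singleton]
    constructor
    · rintro ⟨h3, hfix⟩
      simp only [hedef] at hfix
      have hcomm : Commute c σ := by
        calc c * σ = (c * σ * c⁻¹) * c := by group
        _ = σ * c := by rw [hfix]
      obtain ⟨m, hm⟩ := hcyc.exists_pow_eq (hmove ⟨0, by omega⟩) (hmove (σ ⟨0, by omega⟩))
      have hσm : σ = c ^ m := by
        ext i
        obtain ⟨k, hk⟩ := hcyc.exists_pow_eq (hmove ⟨0, by omega⟩) (hmove i)
        have h1 : σ ((c ^ k) ⟨0, by omega⟩) = (c ^ k) (σ ⟨0, by omega⟩) := by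
          have h2 := (hcomm.pow_left k).eq
          have h3 := DFunLike.congr_fun h2 (⟨0, by omega⟩ : Fin p)
          simp only [Equiv.Perm.mul_apply] at h3
          exact h3.symm
        rw [← hk, h1, ← hm, ← Equiv.Perm.mul_apply, ← Equiv.Perm.mul_apply,
          ← pow_add, add_comm, pow_add]
      have hcm : c ^ (m % p) = σ := by
        rw [hσm]
        conv_rhs => rw [← pow_mod_orderOf]
        rw [horder]
      rcases Nat.eq_zero_or_pos (m % p) with h0' | h0'
      · rw [← hcm, h0', pow_zero]
      · exfalso
        have hcop : Nat.Coprime (m % p) p :=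
          ((hp.coprime_iff_not_dvd).mpr
            (Nat.not_dvd_of_pos_of_lt h0' (Nat.mod_lt _ (by omega)))).symm
        have hcyc' : (c ^ (m % p)).IsCycle := hcyc.pow_iff.mpr (by rwa [horder])
        have hsupp' : (c ^ (m % p)).support = Finset.univ := by
          rw [Equiv.Perm.support_pow_coprime (by rwa [horder]), hsupp]
        have h1 := orbitCount_eq_one (hcm ▸ hcyc') (hcm ▸ hsupp')
        omega
    · rintro rfl
      constructor
      · rw [orbitCount_one (by omega)]; omega
      · simp only [hedef]; group
  have hdvd := orbit_sum hp e hep (fun σ => (Equiv.Perm.sign σ : ℤ)) hsign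
    (Finset.univ.filter (fun σ : Equiv.Perm (Fin p) => 3 ≤ orbitCount σ))
    (fun σ hσ => by
      rw [Finset.mem_filter] at hσ ⊢
      exact ⟨Finset.mem_univ _, by rw [horb]; exact hσ.2⟩)
  rw [hfixed, Finset.sum_singleton] at hdvd
  simp only [Equiv.Perm.sign_one, Units.val_one] at hdvd
  have h0 : (((∑ σ ∈ Finset.univ.filter (fun σ : Equiv.Perm (Fin p) => 3 ≤ orbitCount σ),
      (Equiv.Perm.sign σ : ℤ)) - 1 : ℤ) : ZMod p) = 0 :=
    (ZMod.intCast_zmod_eq_zero_iff_dvd _ _).mpr hdvd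
  rw [Int.cast_sub, Int.cast_one, sub_eq_zero] at h0
  exact h0

end Aux

theorem stmt_11 (p n : ℕ) (hp : p.Prime) (hodd : Odd p) (hn : 1 ≤ n)
    (x : Fin p → (Fin n → ZMod p)) :
    (Function.Injective x ∧ ∑ j, x j = 0 → Ip p n x = 1) ∧
    ((∀ i j, x i = x j) → Ip p n x = 1) ∧
    (¬(Function.Injective x ∧ ∑ j, x j = 0) → ¬(∀ i j, x i = x j) →
      Ip p n x = 0) := by
  classical
  haveI := Fact.mk hp
  have hp2 : p ≠ 2 := by rintro rfl; exact absurd hodd (by decide)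
  have hp3 : 3 ≤ p := by have := hp.two_le; omega
  refine ⟨?_, ?_, ?_⟩
  · rintro ⟨hinj, hsum⟩
    have hRp : Rp p n x = 1 := by
      rw [Rp_eq]
      have hfe : Finset.univ.filter
          (fun σ : Equiv.Perm (Fin p) => 3 ≤ orbitCount σ ∧ ∀ i, x (σ i) = x i) = {1} := by
        ext σ
        simp only [Finset.mem_filter, Finset.mem_univ, true_and, Finset.mem_singleton]
        constructor
        · rintro ⟨-, hfix⟩
          exact Equiv.ext fun i => (hinj (hfix i)).trans rfl
        · rintro rfl
          refine ⟨by rw [orbitCount_one (by omega)]; omega, fun i => rfl⟩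
      rw [hfe, Finset.sum_singleton]
      simp
    rw [Ip, hRp, Fp_eq_one (by omega) x hsum, mul_one]
  · intro hconst
    have hsum : ∑ j, x j = 0 := by
      have h1 : ∑ j, x j = ∑ _j : Fin p, x ⟨0, by omega⟩ :=
        Finset.sum_congr rfl fun j _ => hconst j _
      rw [h1, Finset.sum_const]
      funext i
      simp only [Finset.card_univ, Fintype.card_fin, Pi.smul_apply, Pi.zero_apply,
        smul_eq_mul, nsmul_eq_mul]
      rw [ZMod.natCast_self, zero_mul]
    have hRp : Rp p n x = 1 := by
      rw [Rp_eq]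
      have hfe : Finset.univ.filter
          (fun σ : Equiv.Perm (Fin p) => 3 ≤ orbitCount σ ∧ ∀ i, x (σ i) = x i)
          = Finset.univ.filter (fun σ : Equiv.Perm (Fin p) => 3 ≤ orbitCount σ) := by
        apply Finset.filter_congr
        intro σ _
        simp only [and_iff_left_iff_imp]
        exact fun _ i => hconst _ _
      rw [hfe]
      exact sum_sign_filter hp hp3
    rw [Ip, hRp, Fp_eq_one (by omega) x hsum, mul_one]
  · intro hni hnc
    by_cases hsum : ∑ j, x j = 0
    · have hninj : ¬ Function.Injective x := fun h => hni ⟨h, hsum⟩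
      obtain ⟨a, b, hxab, hab⟩ := Function.not_injective_iff.mp hninj
      push_neg at hnc
      obtain ⟨i0, j0, hij0⟩ := hnc
      have h2 : 2 ≤ (Finset.univ.image x).card := by
        apply Finset.one_lt_card.mpr
        exact ⟨x i0, Finset.mem_image_of_mem x (Finset.mem_univ i0),
          x j0, Finset.mem_image_of_mem x (Finset.mem_univ j0), hij0⟩
      have hne2 : (Finset.univ.image x).card ≠ 2 := fun h => not_two_values hp x hsum h
      have h3 : 3 ≤ (Finset.univ.image x).card := by omega
      have hRp : Rp p n x = 0 := by
        rw [Rp_eq]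
        have hfe : Finset.univ.filter
            (fun σ : Equiv.Perm (Fin p) => 3 ≤ orbitCount σ ∧ ∀ i, x (σ i) = x i)
            = Finset.univ.filter (fun σ : Equiv.Perm (Fin p) => ∀ i, x (σ i) = x i) := by
          apply Finset.filter_congr
          intro σ _
          simp only [and_iff_right_iff_imp]
          exact fun hfix => le_trans h3 (image_card_le_orbitCount (by omega) x σ hfix)
        rw [hfe, sum_fix_eq_zero x hab hxab _ (fun σ => by
          simp only [Finset.mem_filter, Finset.mem_univ, true_and])]
        simp
      rw [Ip, hRp, zero_mul]
    · rw [Ip, Fp_eq_zero hp x hsum, mul_zero]
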